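/- Let a ∈ (0,1), let p be an odd positive integer, let t > 0 and define μ(t,ζ) := t^a + Σ_{ℓ=1}^p (π(a−ℓ)/ℓ!) ζ^ℓ t^{a−ℓ}. Then for every ζ ≥ −t, μ(t,ζ) ≥ (t+ζ)^a. Equivalently, for r ≠ 0 and any s in ℝ^m, the isotropic model m(r,s) := μ(‖r‖, ‖r+s‖−‖r‖) satisfies m(r,s) ≥ ‖r+s‖^a. -/

import Mathlib

open scoped BigOperators

/-- `pifun a j` is `π(a−j) := a ∏_{i=1}^{j−1}(a−i)`. -/
noncomputable def pifun (a : ℝ) (j : ℕ) : ℝ := a * ∏ i ∈ Finset.Icc 1 (j - 1), (a - (i : ℝ))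

/-- `mufun a p t ζ` is the degree-p Taylor polynomial in ζ of `(t+ζ)^a` around `ζ = 0`:
`μ(t,ζ) := t^a + Σ_{ℓ=1}^p (π(a−ℓ)/ℓ!) ζ^ℓ t^{a−ℓ}`. -/
noncomputable def mufun (a : ℝ) (p : ℕ) (t ζ : ℝ) : ℝ :=
  t ^ a + ∑ ℓ ∈ Finset.Icc 1 p, pifun a ℓ / (Nat.factorial ℓ : ℝ) * ζ ^ ℓ * t ^ (a - (ℓ : ℝ))

lemma pifun_rec (b : ℝ) (k : ℕ) (hk : 1 ≤ k) : pifun b (k+1) = pifun b k * (b - (k:ℝ)) := by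
  obtain ⟨m, rfl⟩ : ∃ m, k = m + 1 := ⟨k - 1, by omega⟩
  simp only [pifun, Nat.add_sub_cancel]
  rw [Finset.prod_Icc_succ_top (by omega : 1 ≤ m + 1)]
  push_cast; ring

lemma pifun_succ (b : ℝ) (j : ℕ) (hj : 1 ≤ j) : pifun b (j+1) = b * pifun (b-1) j := by
  induction j with
  | zero => omega
  | succ k ih =>
    rcases Nat.lt_or_ge k 1 with h | h
    · interval_cases k
      simp [pifun]
    · rw [pifun_rec b (k+1) (by omega), ih (by omega), pifun_rec (b-1) k h]
      push_cast; ring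

lemma mufun_zero (b t : ℝ) (n : ℕ) : mufun b n t 0 = t ^ b := by
  rw [mufun, Finset.sum_eq_zero, add_zero]
  intro ℓ hℓ
  rw [Finset.mem_Icc] at hℓ
  rw [zero_pow (by omega)]
  ring

lemma mufun_range (b t ζ : ℝ) (n : ℕ) :
    mufun b n t ζ = t ^ b + ∑ j ∈ Finset.range n,
      pifun b (j+1) / (Nat.factorial (j+1) : ℝ) * ζ ^ (j+1) * t ^ (b - ((j:ℝ)+1)) := by
  rw [mufun, ← Finset.Ico_add_one_right_eq_Icc, Finset.sum_Ico_eq_sum_range]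
  congr 1
  refine Finset.sum_congr rfl fun j _ => ?_
  rw [add_comm 1 j]
  push_cast
  ring

lemma hasDerivAt_mufun (b t : ℝ) (n : ℕ) (ζ : ℝ) :
    HasDerivAt (fun z => mufun b (n+1) t z) (b * mufun (b-1) n t ζ) ζ := by
  have h1 : HasDerivAt (fun z => mufun b (n+1) t z)
      (∑ j ∈ Finset.range (n+1),
        pifun b (j+1) / (Nat.factorial (j+1) : ℝ) * (((j+1 : ℕ) : ℝ) * ζ ^ j)
          * t ^ (b - ((j:ℝ)+1))) ζ := by
    have hfe : (fun z => mufun b (n+1) t z) = fun z => t ^ b + ∑ j ∈ Finset.range (n+1),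
        pifun b (j+1) / (Nat.factorial (j+1) : ℝ) * z ^ (j+1) * t ^ (b - ((j:ℝ)+1)) :=
      funext fun z => mufun_range b t z (n+1)
    rw [hfe]
    refine HasDerivAt.const_add (t ^ b) ?_
    refine HasDerivAt.fun_sum fun j _ => ?_
    have := ((hasDerivAt_pow (j+1) ζ).const_mul
      (pifun b (j+1) / (Nat.factorial (j+1) : ℝ))).mul_const (t ^ (b - ((j:ℝ)+1)))
    simpa using this
  have h2 : (∑ j ∈ Finset.range (n+1),
        pifun b (j+1) / (Nat.factorial (j+1) : ℝ) * (((j+1 : ℕ) : ℝ) * ζ ^ j)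
          * t ^ (b - ((j:ℝ)+1))) = b * mufun (b-1) n t ζ := by
    rw [mufun_range (b-1) t ζ n, Finset.sum_range_succ', add_comm, mul_add, Finset.mul_sum]
    have h0 : pifun b 1 = b := by simp [pifun]
    congr 1
    · simp [h0]
    · refine Finset.sum_congr rfl fun j _ => ?_
      have hfac : (Nat.factorial (j+1+1) : ℝ) = ((j+2 : ℕ) : ℝ) * (Nat.factorial (j+1) : ℝ) := by
        rw [Nat.factorial_succ]; push_cast; ring
      have hps : pifun b (j+2) = b * pifun (b-1) (j+1) := pifun_succ b (j+1) (by omega)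
      have hexp : b - (((j+1:ℕ):ℝ)+1) = (b-1) - ((j:ℝ)+1) := by push_cast; ring
      have hfacne : ((j+2 : ℕ) : ℝ) ≠ 0 := by positivity
      have hfacne2 : (Nat.factorial (j+1) : ℝ) ≠ 0 := by positivity
      rw [show j+1+1 = j+2 from rfl] at *
      rw [hexp, hps, hfac]
      field_simp
  exact h2 ▸ h1

lemma key : ∀ (n : ℕ) (b t : ℝ), 0 < t → ∀ ζ : ℝ, -t < ζ →
    0 ≤ pifun b (n+1) * ζ ^ (n+1) * ((t+ζ) ^ b - mufun b n t ζ) := by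
  intro n
  induction n with
  | zero =>
    intro b t ht ζ hζ
    have hmu : mufun b 0 t ζ = t ^ b := by simp [mufun]
    have hp1 : pifun b 1 = b := by simp [pifun]
    rw [hmu, hp1, pow_one]
    have htζ : 0 < t + ζ := by linarith
    rcases le_or_gt 0 b with hb | hb
    · rcases le_or_gt 0 ζ with hz | hz
      · have := Real.rpow_le_rpow ht.le (by linarith : t ≤ t + ζ) hb
        nlinarith [mul_nonneg (mul_nonneg hb hz) (sub_nonneg.mpr this)]
      · have := Real.rpow_le_rpow htζ.le (by linarith : t + ζ ≤ t) hb
        nlinarith [mul_nonneg (mul_nonneg hb (neg_nonneg.mpr hz.le)) (sub_nonneg.mpr this)]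
    · rcases le_or_gt 0 ζ with hz | hz
      · have := Real.rpow_le_rpow_of_nonpos ht (by linarith : t ≤ t + ζ) hb.le
        nlinarith [mul_nonneg (mul_nonneg (neg_nonneg.mpr hb.le) hz) (sub_nonneg.mpr this)]
      · have := Real.rpow_le_rpow_of_nonpos htζ (by linarith : t + ζ ≤ t) hb.le
        nlinarith [mul_nonneg (mul_nonneg (neg_nonneg.mpr hb.le) (neg_nonneg.mpr hz.le))
          (sub_nonneg.mpr this)]
  | succ n ih =>
    intro b t ht ζ hζ
    set c := pifun b (n+1+1) with hc
    have hcb : c = b * pifun (b-1) (n+1) := pifun_succ b (n+1) (by omega)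
    rcases eq_or_ne c 0 with h0 | h0
    · rw [h0]; simp
    set g : ℝ → ℝ := fun z => (t+z) ^ b - mufun b (n+1) t z with hg
    have hg0 : g 0 = 0 := by simp [hg, mufun_zero]
    have hderiv : ∀ u : ℝ, -t < u →
        HasDerivAt g (b * ((t+u) ^ (b-1) - mufun (b-1) n t u)) u := by
      intro u hu
      have h1 : HasDerivAt (fun z => (t+z) ^ b) (b * (t+u) ^ (b-1)) u := by
        have := HasDerivAt.rpow_const (f := fun z : ℝ => t + z) (f' := 1) (p := b)
          ((hasDerivAt_id u).const_add t) (Or.inl (by dsimp; linarith))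
        simpa using this
      have h2 := hasDerivAt_mufun b t n u
      have h3 := h1.fun_sub h2
      rw [show b * ((t+u) ^ (b-1) - mufun (b-1) n t u) = b * (t+u) ^ (b-1) - b * mufun (b-1) n t u by ring]; exact h3
    have hsign : ∀ u : ℝ, -t < u →
        0 ≤ c * u ^ (n+1) * (b * ((t+u) ^ (b-1) - mufun (b-1) n t u)) := by
      intro u hu
      have hih := ih (b-1) t ht u hu
      have heq : c * u ^ (n+1) * (b * ((t+u) ^ (b-1) - mufun (b-1) n t u))
          = b ^ 2 * (pifun (b-1) (n+1) * u ^ (n+1) * ((t+u) ^ (b-1) - mufun (b-1) n t u)) := by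
        rw [hcb]; ring
      rw [heq]
      positivity
    show 0 ≤ c * ζ ^ (n+1+1) * g ζ
    rcases lt_trichotomy ζ 0 with hz | hz | hz
    · -- ζ < 0 : work on Icc ζ 0
      have hD : ∀ u ∈ Set.Icc ζ (0:ℝ), -t < u := fun u hu => lt_of_lt_of_le hζ hu.1
      have hcont : ContinuousOn g (Set.Icc ζ 0) :=
        fun u hu => ((hderiv u (hD u hu)).continuousAt).continuousWithinAt
      have hdiff : DifferentiableOn ℝ g (interior (Set.Icc ζ 0)) := by
        rw [interior_Icc]
        exact fun u hu =>
          ((hderiv u (hD u (Set.Ioo_subset_Icc_self hu))).differentiableAt).differentiableWithinAt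
      set d := c * (-1:ℝ) ^ (n+1) with hdd
      have hd0 : d ≠ 0 := mul_ne_zero h0 (pow_ne_zero _ (by norm_num))
      have key2 : ∀ u ∈ Set.Ioo ζ (0:ℝ), 0 ≤ d * ((-u) ^ (n+1) * deriv g u) := by
        intro u hu
        have hu' : -t < u := hD u (Set.Ioo_subset_Icc_self hu)
        have hdg : deriv g u = b * ((t+u) ^ (b-1) - mufun (b-1) n t u) := (hderiv u hu').deriv
        have h1 := hsign u hu'
        have hsq : ((-1:ℝ) ^ (n+1)) * ((-1:ℝ) ^ (n+1)) = 1 := by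
          rw [← pow_add]; exact Even.neg_one_pow ⟨n+1, by ring⟩
        have hrw : d * ((-u) ^ (n+1) * (b * ((t+u) ^ (b-1) - mufun (b-1) n t u)))
            = c * u ^ (n+1) * (b * ((t+u) ^ (b-1) - mufun (b-1) n t u)) := by
          rw [hdd, neg_pow]
          linear_combination (c * u ^ (n+1) * (b * ((t+u) ^ (b-1) - mufun (b-1) n t u))) * hsq
        rw [hdg, hrw]; exact h1
      have hodd : ((-1:ℝ) ^ (n+1)) * ((-1:ℝ) ^ (n+1+1)) = -1 := by
        rw [← pow_add]
        exact Odd.neg_one_pow ⟨n+1, by ring⟩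
      have hkey3 : c * ζ ^ (n+1+1) = -(d * (-ζ) ^ (n+1+1)) := by
        rw [hdd, neg_pow]
        linear_combination (c * ζ ^ (n+1+1)) * hodd
      have hzpow : 0 < (-ζ) ^ (n+1+1) := pow_pos (by linarith) _
      rcases lt_or_gt_of_ne hd0 with hdneg | hdpos
      · have hder0 : ∀ u ∈ interior (Set.Icc ζ (0:ℝ)), deriv g u ≤ 0 := by
          rw [interior_Icc]; intro u hu
          have h1 := key2 u hu
          have h2 : 0 < (-u) ^ (n+1) := pow_pos (by linarith [hu.2]) _
          by_contra hcon
          push_neg at hcon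
          have h4 := mul_pos h2 hcon
          nlinarith
        have hanti : AntitoneOn g (Set.Icc ζ 0) :=
          antitoneOn_of_deriv_nonpos (convex_Icc _ _) hcont hdiff hder0
        have hgζ : 0 ≤ g ζ := by
          have := hanti (Set.mem_Icc.mpr ⟨le_refl _, hz.le⟩)
            (Set.mem_Icc.mpr ⟨hz.le, le_refl _⟩) hz.le
          rw [hg0] at this; exact this
        have hA : (0:ℝ) ≤ -(d * (-ζ) ^ (n+1+1)) := by nlinarith
        nlinarith [mul_nonneg hA hgζ, hkey3]
      · have hder0 : ∀ u ∈ interior (Set.Icc ζ (0:ℝ)), 0 ≤ deriv g u := by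
          rw [interior_Icc]; intro u hu
          have h1 := key2 u hu
          have h2 : 0 < (-u) ^ (n+1) := pow_pos (by linarith [hu.2]) _
          by_contra hcon
          push_neg at hcon
          have h4 := mul_neg_of_pos_of_neg h2 hcon
          nlinarith
        have hmono : MonotoneOn g (Set.Icc ζ 0) :=
          monotoneOn_of_deriv_nonneg (convex_Icc _ _) hcont hdiff hder0
        have hgζ : g ζ ≤ 0 := by
          have := hmono (Set.mem_Icc.mpr ⟨le_refl _, hz.le⟩)
            (Set.mem_Icc.mpr ⟨hz.le, le_refl _⟩) hz.le
          rw [hg0] at this; exact this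
        have hA : -(d * (-ζ) ^ (n+1+1)) ≤ 0 := by nlinarith
        nlinarith [mul_nonneg (neg_nonneg.mpr hA) (neg_nonneg.mpr hgζ), hkey3]
    · subst hz
      simp [hg0]
    · -- ζ > 0 : work on Icc 0 ζ
      have hD : ∀ u ∈ Set.Icc (0:ℝ) ζ, -t < u := fun u hu => lt_of_lt_of_le (by linarith) hu.1
      have hcont : ContinuousOn g (Set.Icc 0 ζ) :=
        fun u hu => ((hderiv u (hD u hu)).continuousAt).continuousWithinAt
      have hdiff : DifferentiableOn ℝ g (interior (Set.Icc 0 ζ)) := by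
        rw [interior_Icc]
        exact fun u hu =>
          ((hderiv u (hD u (Set.Ioo_subset_Icc_self hu))).differentiableAt).differentiableWithinAt
      have key2 : ∀ u ∈ Set.Ioo (0:ℝ) ζ, 0 ≤ c * (u ^ (n+1) * deriv g u) := by
        intro u hu
        have hu' : -t < u := hD u (Set.Ioo_subset_Icc_self hu)
        have hdg : deriv g u = b * ((t+u) ^ (b-1) - mufun (b-1) n t u) := (hderiv u hu').deriv
        have h1 := hsign u hu'
        rw [hdg]; nlinarith
      have hzpow : 0 < ζ ^ (n+1+1) := pow_pos hz _
      rcases lt_or_gt_of_ne h0 with hcneg | hcpos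
      · have hder0 : ∀ u ∈ interior (Set.Icc (0:ℝ) ζ), deriv g u ≤ 0 := by
          rw [interior_Icc]; intro u hu
          have h1 := key2 u hu
          have h2 : 0 < u ^ (n+1) := pow_pos hu.1 _
          by_contra hcon
          push_neg at hcon
          have h4 := mul_pos h2 hcon
          nlinarith
        have hanti : AntitoneOn g (Set.Icc 0 ζ) :=
          antitoneOn_of_deriv_nonpos (convex_Icc _ _) hcont hdiff hder0
        have hgζ : g ζ ≤ 0 := by
          have := hanti (Set.mem_Icc.mpr ⟨le_refl _, hz.le⟩)
            (Set.mem_Icc.mpr ⟨hz.le, le_refl _⟩) hz.le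
          rw [hg0] at this; exact this
        nlinarith [mul_nonneg (mul_nonneg (neg_nonneg.mpr hcneg.le) hzpow.le)
          (neg_nonneg.mpr hgζ)]
      · have hder0 : ∀ u ∈ interior (Set.Icc (0:ℝ) ζ), 0 ≤ deriv g u := by
          rw [interior_Icc]; intro u hu
          have h1 := key2 u hu
          have h2 : 0 < u ^ (n+1) := pow_pos hu.1 _
          by_contra hcon
          push_neg at hcon
          have h4 := mul_neg_of_pos_of_neg h2 hcon
          nlinarith
        have hmono : MonotoneOn g (Set.Icc 0 ζ) :=
          monotoneOn_of_deriv_nonneg (convex_Icc _ _) hcont hdiff hder0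
        have hgζ : 0 ≤ g ζ := by
          have := hmono (Set.mem_Icc.mpr ⟨le_refl _, hz.le⟩)
            (Set.mem_Icc.mpr ⟨hz.le, le_refl _⟩) hz.le
          rw [hg0] at this; exact this
        positivity

lemma part1 (a : ℝ) (ha0 : 0 < a) (ha1 : a < 1) (p : ℕ) (hpodd : Odd p)
    (t : ℝ) (ht : 0 < t) : ∀ ζ : ℝ, -t ≤ ζ → (t + ζ) ^ a ≤ mufun a p t ζ := by
  have main : ∀ ζ : ℝ, -t < ζ → (t + ζ) ^ a ≤ mufun a p t ζ := by
    intro ζ hζ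
    have hk := key p a t ht ζ hζ
    have hc : pifun a (p+1) < 0 := by
      have hIcc : pifun a (p+1) = a * ∏ i ∈ Finset.Icc 1 p, (a - (i:ℝ)) := by
        rw [pifun, Nat.add_sub_cancel]
      have hprod : ∏ i ∈ Finset.Icc 1 p, (a - (i:ℝ))
          = (-1:ℝ) ^ p * ∏ i ∈ Finset.Icc 1 p, ((i:ℝ) - a) := by
        calc ∏ i ∈ Finset.Icc 1 p, (a - (i:ℝ))
            = ∏ i ∈ Finset.Icc 1 p, ((-1) * ((i:ℝ) - a)) :=
              Finset.prod_congr rfl fun i _ => by ring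
          _ = (∏ _i ∈ Finset.Icc 1 p, (-1:ℝ)) * ∏ i ∈ Finset.Icc 1 p, ((i:ℝ) - a) := by
              rw [Finset.prod_mul_distrib]
          _ = (-1:ℝ) ^ p * ∏ i ∈ Finset.Icc 1 p, ((i:ℝ) - a) := by
              rw [Finset.prod_const, Nat.card_Icc]
              norm_num
      have hpos : 0 < ∏ i ∈ Finset.Icc 1 p, ((i:ℝ) - a) :=
        Finset.prod_pos fun i hi => by
          rw [Finset.mem_Icc] at hi
          have : (1:ℝ) ≤ (i:ℝ) := by exact_mod_cast hi.1
          linarith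
      have hm1 : (-1:ℝ) ^ p = -1 := hpodd.neg_one_pow
      rw [hIcc, hprod, hm1]
      nlinarith
    rcases eq_or_ne ζ 0 with h0 | h0
    · subst h0; rw [mufun_zero, add_zero]
    · have hz2 : 0 < ζ ^ (p+1) := (hpodd.add_one).pow_pos h0
      have h3 : (t + ζ) ^ a - mufun a p t ζ ≤ 0 := by
        by_contra hcon
        push_neg at hcon
        have h4 := mul_pos hz2 hcon
        nlinarith
      linarith
  intro ζ hζ
  rcases eq_or_lt_of_le hζ with heq | hlt
  · rw [← heq]
    have hFc : ContinuousAt (fun z : ℝ => (t+z) ^ a) (-t) := by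
      have h1 : ContinuousAt (fun x : ℝ => x ^ a) (t + -t) := by
        rw [add_neg_cancel]
        exact Real.continuousAt_rpow_const 0 a (Or.inr ha0.le)
      exact h1.comp ((continuous_const.add continuous_id).continuousAt)
    have hGc : ContinuousAt (fun z => mufun a p t z) (-t) := by
      apply Continuous.continuousAt
      unfold mufun
      fun_prop
    have hne : (nhdsWithin (-t) (Set.Ioi (-t))).NeBot := nhdsGT_neBot _
    refine le_of_tendsto_of_tendsto
      ((hFc.continuousWithinAt (s := Set.Ioi (-t))).tendsto)
      ((hGc.continuousWithinAt (s := Set.Ioi (-t))).tendsto) ?_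
    filter_upwards [self_mem_nhdsWithin] with z hz
    exact main z hz
  · exact main ζ hlt

/-- for odd `p` the model `μ` overestimates `(t+ζ)^a`, and consequently the
isotropic model `m(r,s) = μ(‖r‖, ‖r+s‖−‖r‖)` overestimates `‖r+s‖^a`. -/
theorem stmt6 (a : ℝ) (ha : a ∈ Set.Ioo (0 : ℝ) 1) (p : ℕ) (hpodd : Odd p) (hp : 1 ≤ p)
    (t : ℝ) (ht : 0 < t) :
    (∀ ζ : ℝ, -t ≤ ζ → (t + ζ) ^ a ≤ mufun a p t ζ) ∧
    (∀ (m : ℕ) (r s : EuclideanSpace ℝ (Fin m)), r ≠ 0 →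
      ‖r + s‖ ^ a ≤ mufun a p ‖r‖ (‖r + s‖ - ‖r‖)) := by

  obtain ⟨ha0, ha1⟩ := ha
  refine ⟨part1 a ha0 ha1 p hpodd t ht, ?_⟩
  intro m r s hr
  have hrpos : (0:ℝ) < ‖r‖ := norm_pos_iff.mpr hr
  have h1 : -‖r‖ ≤ ‖r + s‖ - ‖r‖ := by
    have := norm_nonneg (r + s); linarith
  have h2 := part1 a ha0 ha1 p hpodd ‖r‖ hrpos (‖r + s‖ - ‖r‖) h1
  rwa [add_sub_cancel] at h2
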